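/- arXiv:1710.09727 — 4 statements merged into one kernel-verified Lean document; each statement's English description precedes it below -/
import Mathlib

section
/- Let b = 2·arcosh(3/2) (equivalently b = 2·log((3+√5)/2)). Then 0.1149 < e^{-λ_{[0,b]}} < 0.1150. -/
open MeasureTheory Real

private lemma aux_sqrt5_lb : (2.2360679:ℝ) ≤ Real.sqrt 5 := by
  nlinarith [Real.sq_sqrt (show (0:ℝ) ≤ 5 by norm_num), Real.sqrt_nonneg 5]

private lemma aux_sqrt5_ub : Real.sqrt 5 ≤ 2.2360680 := by
  nlinarith [Real.sq_sqrt (show (0:ℝ) ≤ 5 by norm_num), Real.sqrt_nonneg 5]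

private lemma aux_b_lb : (1.9248472:ℝ) ≤ 2 * Real.log ((3 + Real.sqrt 5) / 2) := by
  have h1 : Real.exp 0.9624236 ≤ (3 + Real.sqrt 5) / 2 := by
    have h := Real.exp_bound' (x := 0.9624236) (by norm_num) (by norm_num) (n := 12) (by norm_num)
    have h5 := aux_sqrt5_lb
    calc Real.exp 0.9624236 ≤ _ := h
      _ ≤ (3 + 2.2360679) / 2 := by
          simp only [Finset.sum_range_succ, Finset.sum_range_zero]
          norm_num [Nat.factorial]
      _ ≤ (3 + Real.sqrt 5) / 2 := by linarith
  have h2 : (0.9624236:ℝ) ≤ Real.log ((3 + Real.sqrt 5) / 2) := by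
    rw [Real.le_log_iff_exp_le (by positivity)]
    exact h1
  linarith

private lemma aux_b_ub : 2 * Real.log ((3 + Real.sqrt 5) / 2) ≤ 1.9248474 := by
  have h1 : (3 + Real.sqrt 5) / 2 ≤ Real.exp 0.9624237 := by
    have h : ∑ i ∈ Finset.range 14, (0.9624237:ℝ)^i / i.factorial ≤ Real.exp 0.9624237 :=
      Real.sum_le_exp_of_nonneg (by norm_num) 14
    have h5 := aux_sqrt5_ub
    calc (3 + Real.sqrt 5) / 2 ≤ (3 + 2.2360680) / 2 := by linarith
      _ ≤ ∑ i ∈ Finset.range 14, (0.9624237:ℝ)^i / i.factorial := by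
          simp only [Finset.sum_range_succ, Finset.sum_range_zero]
          norm_num [Nat.factorial]
      _ ≤ _ := h
  have h2 : Real.log ((3 + Real.sqrt 5) / 2) ≤ 0.9624237 := by
    rw [Real.log_le_iff_le_exp (by positivity)]
    exact h1
  linarith

private lemma aux_exp_21636_ub : Real.exp 2.1636 < 10000 / 1149 := by
  have h := Real.exp_bound' (x := 0.5409) (by norm_num) (by norm_num) (n := 10) (by norm_num)
  have h2 : Real.exp 2.1636 = (Real.exp 0.5409) ^ 4 := by
    rw [← Real.exp_nat_mul]; norm_num
  rw [h2]
  calc (Real.exp 0.5409)^4 ≤ (∑ m ∈ Finset.range 10, (0.5409:ℝ)^m / m.factorial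
        + 0.5409^10 * (10+1) / (Nat.factorial 10 * 10))^4 := by
        exact pow_le_pow_left₀ (le_of_lt (Real.exp_pos _)) h 4
    _ < 10000 / 1149 := by
        simp only [Finset.sum_range_succ, Finset.sum_range_zero]
        norm_num [Nat.factorial]

private lemma aux_exp_21630_lb : 200 / 23 < Real.exp 2.1630 := by
  have h : ∑ i ∈ Finset.range 12, (0.54075:ℝ)^i / i.factorial ≤ Real.exp 0.54075 :=
    Real.sum_le_exp_of_nonneg (by norm_num) 12
  have h2 : Real.exp 2.1630 = (Real.exp 0.54075) ^ 4 := by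
    rw [← Real.exp_nat_mul]; norm_num
  rw [h2]
  calc (200:ℝ)/23 < (∑ i ∈ Finset.range 12, (0.54075:ℝ)^i / i.factorial)^4 := by
        simp only [Finset.sum_range_succ, Finset.sum_range_zero]
        norm_num [Nat.factorial]
    _ ≤ (Real.exp 0.54075)^4 := by
        apply pow_le_pow_left₀ _ h
        positivity

private lemma aux_Dbounds {u : ℝ} (hu0 : 0 ≤ u) (hu1 : u ≤ 1) :
    2*u + u^3/3 + u^5/60 + u^7/2520 - u^9/163296 ≤ Real.exp u - Real.exp (-u) ∧
    Real.exp u - Real.exp (-u) ≤ 2*u + u^3/3 + u^5/60 + u^7/2520 + u^9/163296 := by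
  have habs : |u| ≤ 1 := by rwa [abs_of_nonneg hu0]
  have habs' : |(-u)| ≤ 1 := by rwa [abs_neg]
  have hp := Real.exp_bound (n := 9) habs (by norm_num)
  have hm := Real.exp_bound (n := 9) habs' (by norm_num)
  rw [abs_of_nonneg hu0, abs_sub_le_iff] at hp
  rw [abs_neg, abs_of_nonneg hu0, abs_sub_le_iff] at hm
  simp only [Finset.sum_range_succ, Finset.sum_range_zero] at hp hm
  norm_num [Nat.factorial] at hp hm
  obtain ⟨ha, hb⟩ := hp
  obtain ⟨hc, hd⟩ := hm
  constructor <;> nlinarith [ha, hb, hc, hd]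

private lemma aux_expiden (t : ℝ) : Real.exp t + Real.exp (-t) - 2
    = (Real.exp (t/2) - Real.exp (-(t/2)))^2 := by
  have e3 : Real.exp (t/2) * Real.exp (-(t/2)) = 1 := by
    rw [← Real.exp_add]; simp
  have e1 : Real.exp (t/2) * Real.exp (t/2) = Real.exp t := by
    rw [← Real.exp_add]; congr 1; ring
  have e2 : Real.exp (-(t/2)) * Real.exp (-(t/2)) = Real.exp (-t) := by
    rw [← Real.exp_add]; congr 1; ring
  linear_combination -e1 - e2 + 2*e3

private lemma aux_pointwise_low {t : ℝ} (h0 : 0 ≤ t) (h2 : t ≤ 2) :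
    t * (t + t^3/12 + t^5/360 + t^7/20160 + (41/77414400 - 1/30720000)*t^9
      + t^11/309657600 + t^13/104044953600) ≤ Real.exp t + Real.exp (-t) - 2 := by
  have hu0 : (0:ℝ) ≤ t/2 := by linarith
  have hu1 : t/2 ≤ 1 := by linarith
  obtain ⟨hD1, hD2⟩ := aux_Dbounds hu0 hu1
  have hl : (2*(t/2)) * ((2*(t/2)) + (2*(t/2))^3/12 + (2*(t/2))^5/360 + (2*(t/2))^7/20160
      + (41/77414400 - 1/30720000)*(2*(t/2))^9 + (2*(t/2))^11/309657600
      + (2*(t/2))^13/104044953600)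
      ≤ (2*(t/2) + (t/2)^3/3 + (t/2)^5/60 + (t/2)^7/2520 - (t/2)^9/163296)^2 := by
    have h12 : (t/2)^12 ≤ (t/2)^10 := pow_le_pow_of_le_one hu0 hu1 (by norm_num)
    have h14 : (t/2)^14 ≤ (t/2)^10 := pow_le_pow_of_le_one hu0 hu1 (by norm_num)
    have h16 : (t/2)^16 ≤ (t/2)^10 := pow_le_pow_of_le_one hu0 hu1 (by norm_num)
    have h18 : (t/2)^18 ≤ (t/2)^10 := pow_le_pow_of_le_one hu0 hu1 (by norm_num)
    nlinarith [h12, h14, h16, h18, pow_nonneg hu0 10]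
  have hQE : 0 ≤ 2*(t/2) + (t/2)^3/3 + (t/2)^5/60 + (t/2)^7/2520 - (t/2)^9/163296 := by
    have h9 : (t/2)^9 ≤ (t/2)^1 := pow_le_pow_of_le_one hu0 hu1 (by norm_num)
    have h3 := pow_nonneg hu0 3
    have h5 := pow_nonneg hu0 5
    have h7 := pow_nonneg hu0 7
    simp only [pow_one] at h9
    linarith
  have hsq := pow_le_pow_left₀ hQE hD1 2
  rw [aux_expiden t]
  calc t * (t + t^3/12 + t^5/360 + t^7/20160 + (41/77414400 - 1/30720000)*t^9
        + t^11/309657600 + t^13/104044953600)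
      = (2*(t/2)) * ((2*(t/2)) + (2*(t/2))^3/12 + (2*(t/2))^5/360 + (2*(t/2))^7/20160
        + (41/77414400 - 1/30720000)*(2*(t/2))^9 + (2*(t/2))^11/309657600
        + (2*(t/2))^13/104044953600) := by ring
    _ ≤ _ := le_trans hl hsq

private lemma aux_pointwise_high {t : ℝ} (h0 : 0 ≤ t) (h2 : t ≤ 2) :
    Real.exp t + Real.exp (-t) - 2 ≤
    t * (t + t^3/12 + t^5/360 + t^7/20160 + (41/77414400 + 1/30720000)*t^9
      + t^11/309657600 + t^13/104044953600) := by
  have hu0 : (0:ℝ) ≤ t/2 := by linarith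
  have hu1 : t/2 ≤ 1 := by linarith
  obtain ⟨hD1, hD2⟩ := aux_Dbounds hu0 hu1
  have hD0 : 0 ≤ Real.exp (t/2) - Real.exp (-(t/2)) := by
    have := Real.exp_le_exp.mpr (neg_le_self hu0)
    linarith
  have hsq := pow_le_pow_left₀ hD0 hD2 2
  have hh : (2*(t/2) + (t/2)^3/3 + (t/2)^5/60 + (t/2)^7/2520 + (t/2)^9/163296)^2
      ≤ (2*(t/2)) * ((2*(t/2)) + (2*(t/2))^3/12 + (2*(t/2))^5/360 + (2*(t/2))^7/20160
      + (41/77414400 + 1/30720000)*(2*(t/2))^9 + (2*(t/2))^11/309657600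
      + (2*(t/2))^13/104044953600) := by
    have h12 : (t/2)^12 ≤ (t/2)^10 := pow_le_pow_of_le_one hu0 hu1 (by norm_num)
    have h14 : (t/2)^14 ≤ (t/2)^10 := pow_le_pow_of_le_one hu0 hu1 (by norm_num)
    have h16 : (t/2)^16 ≤ (t/2)^10 := pow_le_pow_of_le_one hu0 hu1 (by norm_num)
    have h18 : (t/2)^18 ≤ (t/2)^10 := pow_le_pow_of_le_one hu0 hu1 (by norm_num)
    nlinarith [h12, h14, h16, h18, pow_nonneg hu0 10]
  rw [aux_expiden t]
  calc (Real.exp (t/2) - Real.exp (-(t/2)))^2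
      ≤ (2*(t/2) + (t/2)^3/3 + (t/2)^5/60 + (t/2)^7/2520 + (t/2)^9/163296)^2 := hsq
    _ ≤ (2*(t/2)) * ((2*(t/2)) + (2*(t/2))^3/12 + (2*(t/2))^5/360 + (2*(t/2))^7/20160
        + (41/77414400 + 1/30720000)*(2*(t/2))^9 + (2*(t/2))^11/309657600
        + (2*(t/2))^13/104044953600) := hh
    _ = t * (t + t^3/12 + t^5/360 + t^7/20160 + (41/77414400 + 1/30720000)*t^9
        + t^11/309657600 + t^13/104044953600) := by ring

private lemma aux_integral_poly (c B : ℝ) :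
    ∫ t in (0:ℝ)..B, (t + t^3/12 + t^5/360 + t^7/20160 + c*t^9
      + t^11/309657600 + t^13/104044953600)
    = B^2/2 + B^4/48 + B^6/2160 + B^8/161280 + c*B^10/10
      + B^12/3715891200 + B^14/1456629350400 := by
  have key : ∀ t : ℝ, HasDerivAt (fun x : ℝ => x^2/2 + x^4/48 + x^6/2160 + x^8/161280
      + c*x^10/10 + x^12/3715891200 + x^14/1456629350400)
      (t + t^3/12 + t^5/360 + t^7/20160 + c*t^9 + t^11/309657600 + t^13/104044953600) t := by
    intro t
    refine HasDerivAt.congr_deriv ((((((((hasDerivAt_pow 2 t).div_const 2).add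
      ((hasDerivAt_pow 4 t).div_const 48)).add
      ((hasDerivAt_pow 6 t).div_const 2160)).add
      ((hasDerivAt_pow 8 t).div_const 161280)).add
      (((hasDerivAt_pow 10 t).const_mul c).div_const 10)).add
      ((hasDerivAt_pow 12 t).div_const 3715891200)).add
      ((hasDerivAt_pow 14 t).div_const 1456629350400)) ?_
    push_cast
    ring
  rw [intervalIntegral.integral_eq_sub_of_hasDerivAt (fun t _ => key t)
    (Continuous.intervalIntegrable (by fun_prop) _ _)]
  norm_num

private lemma aux_f_integrable {B : ℝ} (hB0 : 0 ≤ B) (hB2 : B ≤ 2) :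
    IntervalIntegrable (fun t => (Real.exp t + Real.exp (-t) - 2)/t) volume 0 B := by
  rw [intervalIntegrable_iff_integrableOn_Ioc_of_le hB0]
  apply MeasureTheory.Integrable.mono' (g := fun _ => (20:ℝ))
      ((integrableOn_const_iff (C := (20:ℝ))).mpr (Or.inr measure_Ioc_lt_top))
  · exact (((Real.measurable_exp.add (Real.measurable_exp.comp measurable_neg)).sub
      measurable_const).div measurable_id).aestronglyMeasurable
  · filter_upwards [ae_restrict_mem measurableSet_Ioc] with t ht
    obtain ⟨ht0, htB⟩ := ht
    have ht2 : t ≤ 2 := le_trans htB hB2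
    have ht0' : (0:ℝ) ≤ t := le_of_lt ht0
    have hnum0 : 0 ≤ Real.exp t + Real.exp (-t) - 2 := by
      rw [aux_expiden]; positivity
    have hhigh := aux_pointwise_high ht0' ht2
    have hPhi : t + t^3/12 + t^5/360 + t^7/20160 + (41/77414400 + 1/30720000)*t^9
        + t^11/309657600 + t^13/104044953600 ≤ 20 := by
      have h3 := pow_le_pow_left₀ ht0' ht2 3
      have h5 := pow_le_pow_left₀ ht0' ht2 5
      have h7 := pow_le_pow_left₀ ht0' ht2 7
      have h9 := pow_le_pow_left₀ ht0' ht2 9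
      have h11 := pow_le_pow_left₀ ht0' ht2 11
      have h13 := pow_le_pow_left₀ ht0' ht2 13
      norm_num at h3 h5 h7 h9 h11 h13
      linarith
    rw [Real.norm_eq_abs, abs_of_nonneg (div_nonneg hnum0 ht0')]
    rw [div_le_iff₀ ht0]
    nlinarith [hhigh, mul_le_mul_of_nonneg_left hPhi ht0']

/-- With `b = 2·arcosh(3/2) = 2·log((3+√5)/2)`, we have `0.1149 < e^{-λ_{[0,b]}} < 0.1150`. -/
theorem thick_part_probability_bounds :
    0.1149 < Real.exp (-(∫ t in (0:ℝ)..(2 * Real.log ((3 + Real.sqrt 5) / 2)),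
        (Real.exp t + Real.exp (-t) - 2) / t)) ∧
    Real.exp (-(∫ t in (0:ℝ)..(2 * Real.log ((3 + Real.sqrt 5) / 2)),
        (Real.exp t + Real.exp (-t) - 2) / t)) < 0.1150 := by
  have hb1 := aux_b_lb
  have hb2 := aux_b_ub
  set B := 2 * Real.log ((3 + Real.sqrt 5) / 2) with hBdef
  have hB0 : (0:ℝ) ≤ B := by linarith
  have hB2 : B ≤ 2 := by linarith
  have hfint := aux_f_integrable hB0 hB2
  have hglo_int : IntervalIntegrable (fun t : ℝ => t + t^3/12 + t^5/360 + t^7/20160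
      + (41/77414400 - 1/30720000)*t^9 + t^11/309657600 + t^13/104044953600) volume 0 B :=
    Continuous.intervalIntegrable (by fun_prop) _ _
  have hghi_int : IntervalIntegrable (fun t : ℝ => t + t^3/12 + t^5/360 + t^7/20160
      + (41/77414400 + 1/30720000)*t^9 + t^11/309657600 + t^13/104044953600) volume 0 B :=
    Continuous.intervalIntegrable (by fun_prop) _ _
  have hlo : (∫ t in (0:ℝ)..B, (t + t^3/12 + t^5/360 + t^7/20160
      + (41/77414400 - 1/30720000)*t^9 + t^11/309657600 + t^13/104044953600))
      ≤ ∫ t in (0:ℝ)..B, (Real.exp t + Real.exp (-t) - 2) / t := by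
    apply intervalIntegral.integral_mono_on hB0 hglo_int hfint
    intro t ht
    obtain ⟨ht0, htB⟩ := ht
    rcases eq_or_lt_of_le ht0 with h | h
    · subst h
      norm_num
    · rw [le_div_iff₀ h]
      nlinarith [aux_pointwise_low ht0 (le_trans htB hB2)]
  have hhi : (∫ t in (0:ℝ)..B, (Real.exp t + Real.exp (-t) - 2) / t)
      ≤ ∫ t in (0:ℝ)..B, (t + t^3/12 + t^5/360 + t^7/20160
      + (41/77414400 + 1/30720000)*t^9 + t^11/309657600 + t^13/104044953600) := by
    apply intervalIntegral.integral_mono_on hB0 hfint hghi_int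
    intro t ht
    obtain ⟨ht0, htB⟩ := ht
    rcases eq_or_lt_of_le ht0 with h | h
    · subst h
      norm_num
    · rw [div_le_iff₀ h]
      nlinarith [aux_pointwise_high ht0 (le_trans htB hB2)]
  rw [aux_integral_poly (41/77414400 - 1/30720000) B] at hlo
  rw [aux_integral_poly (41/77414400 + 1/30720000) B] at hhi
  have p2l := pow_le_pow_left₀ (show (0:ℝ) ≤ 1.9248472 by norm_num) hb1 2
  have p4l := pow_le_pow_left₀ (show (0:ℝ) ≤ 1.9248472 by norm_num) hb1 4
  have p6l := pow_le_pow_left₀ (show (0:ℝ) ≤ 1.9248472 by norm_num) hb1 6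
  have p8l := pow_le_pow_left₀ (show (0:ℝ) ≤ 1.9248472 by norm_num) hb1 8
  have p10l := pow_le_pow_left₀ (show (0:ℝ) ≤ 1.9248472 by norm_num) hb1 10
  have p12l := pow_le_pow_left₀ (show (0:ℝ) ≤ 1.9248472 by norm_num) hb1 12
  have p14l := pow_le_pow_left₀ (show (0:ℝ) ≤ 1.9248472 by norm_num) hb1 14
  have p2u := pow_le_pow_left₀ hB0 hb2 2
  have p4u := pow_le_pow_left₀ hB0 hb2 4
  have p6u := pow_le_pow_left₀ hB0 hb2 6
  have p8u := pow_le_pow_left₀ hB0 hb2 8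
  have p10u := pow_le_pow_left₀ hB0 hb2 10
  have p12u := pow_le_pow_left₀ hB0 hb2 12
  have p14u := pow_le_pow_left₀ hB0 hb2 14
  norm_num only at p2l p4l p6l p8l p10l p12l p14l p2u p4u p6u p8u p10u p12u p14u
  have hlam_lo : (2.1630:ℝ) ≤ ∫ t in (0:ℝ)..B, (Real.exp t + Real.exp (-t) - 2) / t := by
    refine le_trans ?_ hlo
    nlinarith [p2l, p4l, p6l, p8l, p10l, p12l, p14l]
  have hlam_hi : (∫ t in (0:ℝ)..B, (Real.exp t + Real.exp (-t) - 2) / t) ≤ 2.1636 := by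
    refine le_trans hhi ?_
    nlinarith [p2u, p4u, p6u, p8u, p10u, p12u, p14u]
  constructor
  · calc (0.1149:ℝ) = ((10000:ℝ)/1149)⁻¹ * (1149/10000 * (10000/1149)) := by norm_num
      _ = ((10000:ℝ)/1149)⁻¹ := by norm_num
      _ < (Real.exp 2.1636)⁻¹ := inv_strictAnti₀ (Real.exp_pos _) aux_exp_21636_ub
      _ = Real.exp (-(2.1636:ℝ)) := (Real.exp_neg _).symm
      _ ≤ Real.exp (-(∫ t in (0:ℝ)..B, (Real.exp t + Real.exp (-t) - 2) / t)) :=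
          Real.exp_le_exp.mpr (by linarith)
  · calc Real.exp (-(∫ t in (0:ℝ)..B, (Real.exp t + Real.exp (-t) - 2) / t))
        ≤ Real.exp (-(2.1630:ℝ)) := Real.exp_le_exp.mpr (by linarith)
      _ = (Real.exp 2.1630)⁻¹ := Real.exp_neg _
      _ < ((200:ℝ)/23)⁻¹ := inv_strictAnti₀ (by norm_num) aux_exp_21630_lb
      _ = 0.1150 := by norm_num
end

section
/- (Method of moments for Poisson approximation.) Let k ∈ ℕ, let λ₁, …, λ_k ∈ (0, ∞), and for each i ∈ ℕ let (Ω_i, P_i) be a probability space carrying measurable random variables X_{1,i}, …, X_{k,i} : Ω_i → ℕ. Assume that for all n₁, …, n_k ∈ ℕ the product (X_{1,i})_{n₁}·(X_{2,i})_{n₂}⋯(X_{k,i})_{n_k} is integrable with respect to P_i, and that its expectation E_i[(X_{1,i})_{n₁}⋯(X_{k,i})_{n_k}] converges to λ₁^{n₁}·λ₂^{n₂}⋯λ_k^{n_k} as i → ∞. Then for all m₁, …, m_k ∈ ℕ, the probability P_i[X_{1,i} = m₁, …, X_{k,i} = m_k] converges to ∏_{j=1}^k λ_j^{m_j} e^{-λ_j}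 / m_j! as i → ∞. -/
open Finset

noncomputable def pCoef (m n : ℕ) : ℝ :=
  if m ≤ n then (-1:ℝ)^(n-m) * (n.choose m) / (n.factorial) else 0

lemma choose_cross (m N x : ℕ) (hm : m ≤ N + 1) :
    (x.choose (N+1)) * ((N+1).choose m) = (x.choose m) * ((x-m).choose (N+1-m)) := by
  rcases le_or_gt (N+1) x with h | h
  · exact Nat.choose_mul hm
  · rcases le_or_gt m x with h' | h'
    · have e1 : x.choose (N+1) = 0 := Nat.choose_eq_zero_of_lt h
      have e2 : (x-m).choose (N+1-m) = 0 := Nat.choose_eq_zero_of_lt (by omega)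
      rw [e1, e2, Nat.zero_mul, Nat.mul_zero]
    · have e1 : x.choose (N+1) = 0 := Nat.choose_eq_zero_of_lt h
      have e2 : x.choose m = 0 := Nat.choose_eq_zero_of_lt h'
      rw [e1, e2, Nat.zero_mul, Nat.zero_mul]

lemma key_identity (m N x : ℕ) (hN : m ≤ N) (hx : m < x) :
    ∑ n ∈ Finset.Icc m N, (-1:ℝ)^(n-m) * (n.choose m) * (x.choose n)
      = (-1:ℝ)^(N-m) * (x.choose m) * ((x - m - 1).choose (N - m)) := by
  induction N, hN using Nat.le_induction with
  | base => simp
  | succ N hN ih =>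
    rw [← Finset.Ico_add_one_right_eq_Icc, Finset.sum_Ico_succ_top (by omega), Finset.Ico_add_one_right_eq_Icc, ih]
    have hxm : x - m = (x - m - 1) + 1 := by omega
    have hNm : N + 1 - m = (N - m) + 1 := by omega
    have h1 : (x-m).choose (N+1-m)
        = (x-m-1).choose (N-m) + (x-m-1).choose (N+1-m) := by
      rw [hxm, hNm]; exact Nat.choose_succ_succ _ _
    have h2 : ((x.choose (N+1)) * ((N+1).choose m) : ℝ)
        = ((x.choose m) * ((x-m).choose (N+1-m)) : ℝ) := by
      exact_mod_cast congrArg (Nat.cast : ℕ → ℝ) (choose_cross m N x (by omega))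
    have h3 : (-1:ℝ)^(N+1-m) = -(-1:ℝ)^(N-m) := by rw [hNm, pow_succ]; ring
    have h1' : ((x-m).choose (N+1-m) : ℝ)
        = ((x-m-1).choose (N-m) : ℝ) + ((x-m-1).choose (N+1-m) : ℝ) := by
      exact_mod_cast congrArg (Nat.cast : ℕ → ℝ) h1
    rw [h3]
    linear_combination (-((-1:ℝ)^(N-m))) * h2 + (-((-1:ℝ)^(N-m)) * (x.choose m : ℝ)) * h1'

lemma key_bound (m N x : ℕ) (hN : m ≤ N) :
    |(∑ n ∈ Finset.Icc m N, (-1:ℝ)^(n-m) * (n.choose m) * (x.choose n))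
      - (if x = m then 1 else 0)|
    ≤ ((N+1).choose m : ℝ) * (x.choose (N+1) : ℝ) := by
  rcases lt_trichotomy x m with hx | hx | hx
  · have hz : ∑ n ∈ Finset.Icc m N, (-1:ℝ)^(n-m) * (n.choose m) * (x.choose n) = 0 :=
      Finset.sum_eq_zero fun n hn => by
        rw [Nat.choose_eq_zero_of_lt (lt_of_lt_of_le hx (Finset.mem_Icc.1 hn).1)]
        simp
    rw [hz, if_neg (by omega)]
    simp only [sub_zero, abs_zero]
    positivity
  · subst hx
    have hz : ∑ n ∈ Finset.Icc x N, (-1:ℝ)^(n-x) * (n.choose x) * (x.choose n) = 1 := by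
      rw [Finset.sum_eq_single x]
      · simp
      · intro n hn hne
        rw [Nat.choose_eq_zero_of_lt (lt_of_le_of_ne (Finset.mem_Icc.1 hn).1 (Ne.symm hne))]
        simp
      · intro h; exact absurd (Finset.mem_Icc.2 ⟨le_refl x, hN⟩) h
    rw [hz, if_pos rfl]
    simp only [sub_self, abs_zero]
    positivity
  · rw [key_identity m N x hN hx, if_neg (by omega), sub_zero, abs_mul, abs_mul, abs_pow,
      abs_neg, abs_one, one_pow, one_mul, Nat.abs_cast, Nat.abs_cast]
    have hmono : (x-m-1).choose (N-m) ≤ (x-m).choose (N+1-m) := by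
      have hxm : x - m = (x - m - 1) + 1 := by omega
      have hNm : N + 1 - m = (N - m) + 1 := by omega
      rw [hxm, hNm, Nat.choose_succ_succ]
      exact Nat.le_add_right _ _
    have hkey : (x.choose m) * ((x-m).choose (N+1-m)) = (x.choose (N+1)) * ((N+1).choose m) :=
      (choose_cross m N x (by omega)).symm
    have : (x.choose m) * ((x-m-1).choose (N-m)) ≤ (N+1).choose m * (x.choose (N+1)) := by
      calc (x.choose m) * ((x-m-1).choose (N-m)) ≤ (x.choose m) * ((x-m).choose (N+1-m)) :=
            Nat.mul_le_mul_left _ hmono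
        _ = (N+1).choose m * (x.choose (N+1)) := by rw [hkey, Nat.mul_comm]
    exact_mod_cast this

lemma pCoef_sum_eq (m N x : ℕ) :
    ∑ n ∈ Finset.range (N+1), pCoef m n * (x.descFactorial n : ℝ)
      = ∑ n ∈ Finset.Icc m N, (-1:ℝ)^(n-m) * (n.choose m) * (x.choose n) := by
  have hsub : Finset.Icc m N ⊆ Finset.range (N+1) := fun n hn =>
    Finset.mem_range.2 (by have := (Finset.mem_Icc.1 hn).2; omega)
  have hzero : ∀ n ∈ Finset.range (N+1), n ∉ Finset.Icc m N →
      pCoef m n * (x.descFactorial n : ℝ) = 0 := by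
    intro n hn hn'
    have : ¬ m ≤ n := fun hmn =>
      hn' (Finset.mem_Icc.2 ⟨hmn, by have := Finset.mem_range.1 hn; omega⟩)
    rw [pCoef, if_neg this, zero_mul]
  rw [← Finset.sum_subset hsub hzero]
  refine Finset.sum_congr rfl fun n hn => ?_
  have hmn : m ≤ n := (Finset.mem_Icc.1 hn).1
  rw [pCoef, if_pos hmn, Nat.descFactorial_eq_factorial_mul_choose]
  push_cast
  field_simp

lemma pCoef_bound (m N x : ℕ) (hN : m ≤ N) :
    |(∑ n ∈ Finset.range (N+1), pCoef m n * (x.descFactorial n : ℝ))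
      - (if x = m then 1 else 0)|
    ≤ ((N+1).choose m : ℝ) / ((N+1).factorial : ℝ) * (x.descFactorial (N+1) : ℝ) := by
  rw [pCoef_sum_eq]
  have h := key_bound m N x hN
  have hdesc : (x.descFactorial (N+1) : ℝ) = ((N+1).factorial : ℝ) * (x.choose (N+1) : ℝ) := by
    exact_mod_cast congrArg (Nat.cast : ℕ → ℝ) (Nat.descFactorial_eq_factorial_mul_choose x (N+1))
  rw [hdesc]
  have hfac : ((N+1).factorial : ℝ) ≠ 0 := Nat.cast_ne_zero.2 (Nat.factorial_ne_zero _)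
  calc |_ - _| ≤ ((N+1).choose m : ℝ) * (x.choose (N+1) : ℝ) := h
    _ = ((N+1).choose m : ℝ) / ((N+1).factorial : ℝ) * (((N+1).factorial : ℝ) * (x.choose (N+1) : ℝ)) := by
        field_simp

open Filter in
lemma aux_tendsto_shift (m : ℕ) : Tendsto (fun N => N + 1 - m) atTop atTop :=
  tendsto_atTop.2 fun b => eventually_atTop.2 ⟨b + m, fun n hn => by omega⟩

open Filter in
lemma pCoef_sum_tendsto (m : ℕ) (l : ℝ) :
    Tendsto (fun N => ∑ n ∈ Finset.range (N+1), pCoef m n * l^n) atTop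
      (nhds (l^m * Real.exp (-l) / (m.factorial : ℝ))) := by
  have hfm : ((m.factorial : ℝ)) ≠ 0 := Nat.cast_ne_zero.2 (Nat.factorial_ne_zero _)
  have hexp : Tendsto (fun R => ∑ r ∈ Finset.range R, (-l)^r / (r.factorial : ℝ)) atTop
      (nhds (Real.exp (-l))) := by
    have := (NormedSpace.expSeries_div_hasSum_exp (-l)).tendsto_sum_nat
    rwa [← Real.exp_eq_exp_ℝ] at this
  have hmain : Tendsto (fun N => l^m / (m.factorial : ℝ) *
      ∑ r ∈ Finset.range (N+1-m), (-l)^r / (r.factorial : ℝ)) atTop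
      (nhds (l^m / (m.factorial : ℝ) * Real.exp (-l))) :=
    (hexp.comp (aux_tendsto_shift m)).const_mul _
  have heq : ∀ N, m ≤ N → ∑ n ∈ Finset.range (N+1), pCoef m n * l^n
      = l^m / (m.factorial : ℝ) * ∑ r ∈ Finset.range (N+1-m), (-l)^r / (r.factorial : ℝ) := by
    intro N hN
    have hsub : Finset.Icc m N ⊆ Finset.range (N+1) := fun n hn =>
      Finset.mem_range.2 (by have := (Finset.mem_Icc.1 hn).2; omega)
    have hzero : ∀ n ∈ Finset.range (N+1), n ∉ Finset.Icc m N → pCoef m n * l^n = 0 := by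
      intro n hn hn'
      have : ¬ m ≤ n := fun hmn =>
        hn' (Finset.mem_Icc.2 ⟨hmn, by have := Finset.mem_range.1 hn; omega⟩)
      rw [pCoef, if_neg this, zero_mul]
    rw [← Finset.sum_subset hsub hzero, ← Finset.Ico_add_one_right_eq_Icc, Finset.sum_Ico_eq_sum_range,
      Finset.mul_sum]
    refine Finset.sum_congr rfl fun r _ => ?_
    rw [pCoef, if_pos (Nat.le_add_right m r)]
    have hfact : ((m+r).choose m : ℝ) * (m.factorial : ℝ) * (r.factorial : ℝ)
        = ((m+r).factorial : ℝ) := by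
      have := Nat.choose_mul_factorial_mul_factorial (Nat.le_add_right m r)
      rw [Nat.add_sub_cancel_left] at this
      exact_mod_cast congrArg (Nat.cast : ℕ → ℝ) this
    have hfmr : (((m+r).factorial : ℝ)) ≠ 0 := Nat.cast_ne_zero.2 (Nat.factorial_ne_zero _)
    have hfr : ((r.factorial : ℝ)) ≠ 0 := Nat.cast_ne_zero.2 (Nat.factorial_ne_zero _)
    have hsimp : m + r - m = r := by omega
    rw [hsimp, neg_pow, pow_add]
    field_simp
    linear_combination (l^m * l^r * (-1:ℝ)^r) * hfact
  have : (fun N => l^m / (m.factorial : ℝ) *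
      ∑ r ∈ Finset.range (N+1-m), (-l)^r / (r.factorial : ℝ))
      =ᶠ[atTop] (fun N => ∑ n ∈ Finset.range (N+1), pCoef m n * l^n) :=
    eventually_atTop.2 ⟨m, fun N hN => (heq N hN).symm⟩
  have hres := hmain.congr' this
  convert hres using 2
  ring

open Filter in
lemma errterm_tendsto (m : ℕ) (l : ℝ) :
    Tendsto (fun N => ((N+1).choose m : ℝ) / (((N+1).factorial : ℝ)) * l^(N+1)) atTop
      (nhds 0) := by
  have hmain : Tendsto (fun N => l^m / (m.factorial : ℝ) *
      (l^(N+1-m) / (((N+1-m).factorial : ℝ)))) atTop (nhds (l^m / (m.factorial : ℝ) * 0)) :=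
    ((FloorSemiring.tendsto_pow_div_factorial_atTop l).comp (aux_tendsto_shift m)).const_mul _
  rw [mul_zero] at hmain
  refine hmain.congr' (eventually_atTop.2 ⟨m, fun N hN => ?_⟩)
  have hfact : ((N+1).choose m : ℝ) * (m.factorial : ℝ) * (((N+1-m).factorial : ℝ))
      = ((N+1).factorial : ℝ) := by
    exact_mod_cast congrArg (Nat.cast : ℕ → ℝ)
      (Nat.choose_mul_factorial_mul_factorial (by omega : m ≤ N+1))
  have h1 : ((m.factorial : ℝ)) ≠ 0 := Nat.cast_ne_zero.2 (Nat.factorial_ne_zero _)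
  have h2 : (((N+1-m).factorial : ℝ)) ≠ 0 := Nat.cast_ne_zero.2 (Nat.factorial_ne_zero _)
  have h3 : (((N+1).factorial : ℝ)) ≠ 0 := Nat.cast_ne_zero.2 (Nat.factorial_ne_zero _)
  have hl : l^(N+1) = l^m * l^(N+1-m) := by rw [← pow_add]; congr 1; omega
  show _ = ((N+1).choose m : ℝ) / (((N+1).factorial : ℝ)) * l^(N+1)
  rw [hl]
  field_simp
  linear_combination (-(l^m * l^(N+1-m))) * hfact

open MeasureTheory Filter

/-- **The method of moments for Poisson approximation.**
If the joint factorial moments of the `ℕ`-valued random variables `X i 1, …, X i k`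
converge to `λ₁^{n₁}⋯λ_k^{n_k}` for all `n₁,…,n_k`, then the vector converges jointly in
distribution to a vector of independent Poisson random variables with means `λ₁,…,λ_k`. -/
theorem method_of_moments_poisson
    {k : ℕ} (lam : Fin k → ℝ) (hlam : ∀ j, 0 < lam j)
    {Ω : ℕ → Type*} [∀ i, MeasurableSpace (Ω i)]
    (P : ∀ i, Measure (Ω i)) [∀ i, IsProbabilityMeasure (P i)]
    (X : ∀ i, Fin k → Ω i → ℕ) (hX : ∀ i j, Measurable (X i j))
    (hint : ∀ (i : ℕ) (n : Fin k → ℕ),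
      Integrable (fun ω => ∏ j, ((X i j ω).descFactorial (n j) : ℝ)) (P i))
    (hmom : ∀ n : Fin k → ℕ,
      Tendsto (fun i => ∫ ω, (∏ j, ((X i j ω).descFactorial (n j) : ℝ)) ∂(P i))
        atTop (nhds (∏ j, lam j ^ n j))) :
    ∀ m : Fin k → ℕ,
      Tendsto (fun i => ((P i) {ω | ∀ j, X i j ω = m j}).toReal)
        atTop (nhds (∏ j, lam j ^ m j * Real.exp (-lam j) / (m j).factorial)) := by
  intro m
  classical
  set L : ℝ := ∏ j, lam j ^ m j * Real.exp (-lam j) / (m j).factorial with hL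
  set T : ℕ → ℝ := fun N => ∏ j, ∑ n ∈ Finset.range (N+1), pCoef (m j) n * lam j ^ n with hT
  set B : ℕ → Fin k → ℝ := fun N j => ((N+1).choose (m j) : ℝ) / ((N+1).factorial : ℝ) with hB
  set nn : ℕ → Finset (Fin k) → Fin k → ℕ := fun N S j => if j ∈ S then N+1 else 0 with hnn
  set Pw : Finset (Finset (Fin k)) := (Finset.univ : Finset (Fin k)).powerset.erase ∅ with hPw
  set G : ℕ → ℕ → ℝ := fun N i =>
      ∑ n ∈ Fintype.piFinset (fun _ : Fin k => Finset.range (N+1)),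
      (∏ j, pCoef (m j) (n j)) * ∫ ω, (∏ j, ((X i j ω).descFactorial (n j) : ℝ)) ∂ (P i) with hG
  set H : ℕ → ℕ → ℝ := fun N i => ∑ S ∈ Pw, (∏ j ∈ S, B N j) *
      ∫ ω, (∏ j, ((X i j ω).descFactorial (nn N S j) : ℝ)) ∂ (P i) with hH
  set err : ℕ → ℝ := fun N => ∑ S ∈ Pw, (∏ j ∈ S, B N j) * ∏ j, lam j ^ (nn N S j) with herrdef
  -- limits in i for fixed N
  have hGlim : ∀ N, Tendsto (fun i => G N i) atTop (nhds (T N)) := by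
    intro N
    have h1 : T N = ∑ n ∈ Fintype.piFinset (fun _ : Fin k => Finset.range (N+1)),
        (∏ j, pCoef (m j) (n j)) * ∏ j, lam j ^ (n j) := by
      rw [hT]
      dsimp only
      rw [Finset.prod_univ_sum]
      exact Finset.sum_congr rfl fun n _ => by rw [Finset.prod_mul_distrib]
    rw [h1]
    exact tendsto_finset_sum _ fun n _ => (hmom n).const_mul _
  have hHlim : ∀ N, Tendsto (fun i => H N i) atTop (nhds (err N)) := by
    intro N
    exact tendsto_finset_sum _ fun S _ => (hmom (nn N S)).const_mul _
  -- limits in N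
  have hTlim : Tendsto T atTop (nhds L) := by
    rw [hL]
    exact tendsto_finset_prod _ fun j _ => pCoef_sum_tendsto (m j) (lam j)
  have herrlim : Tendsto err atTop (nhds 0) := by
    have h0 : Tendsto (fun N => ∑ S ∈ Pw, ∏ j ∈ S, (B N j * lam j ^ (N+1))) atTop
        (nhds (∑ S ∈ Pw, ∏ j ∈ S, (0:ℝ))) :=
      tendsto_finset_sum _ fun S _ => tendsto_finset_prod _ fun j _ =>
        errterm_tendsto (m j) (lam j)
    have hz : (∑ S ∈ Pw, ∏ j ∈ S, (0:ℝ)) = 0 := by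
      refine Finset.sum_eq_zero fun S hS => ?_
      have hSne : S ≠ ∅ := (Finset.mem_erase.1 hS).1
      obtain ⟨j, hj⟩ := Finset.nonempty_iff_ne_empty.2 hSne
      exact Finset.prod_eq_zero hj rfl
    rw [hz] at h0
    refine h0.congr fun N => ?_
    refine Finset.sum_congr rfl fun S hS => ?_
    rw [Finset.prod_mul_distrib]
    congr 1
    have h2 : ∏ j ∈ S, lam j ^ (nn N S j) = ∏ j, lam j ^ (nn N S j) :=
      Finset.prod_subset (Finset.subset_univ S) (fun j _ hj => by simp [hnn, hj])
    rw [← h2]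
    exact Finset.prod_congr rfl fun j hj => by simp [hnn, hj]
  -- expansion of the g-product
  have hg_expand : ∀ N i, (fun ω => ∏ j, ∑ n ∈ Finset.range (N+1),
        pCoef (m j) n * ((X i j ω).descFactorial n : ℝ))
      = fun ω => ∑ n ∈ Fintype.piFinset (fun _ : Fin k => Finset.range (N+1)),
        (∏ j, pCoef (m j) (n j)) * ∏ j, ((X i j ω).descFactorial (n j) : ℝ) := by
    intro N i
    funext ω
    rw [Finset.prod_univ_sum]
    exact Finset.sum_congr rfl fun n _ => by rw [Finset.prod_mul_distrib]
  have hg_int : ∀ N i, Integrable (fun ω => ∏ j, ∑ n ∈ Finset.range (N+1),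
      pCoef (m j) n * ((X i j ω).descFactorial n : ℝ)) (P i) := by
    intro N i
    rw [hg_expand N i]
    exact integrable_finset_sum _ fun n _ => (hint i n).const_mul _
  have hg_integral : ∀ N i, ∫ ω, (∏ j, ∑ n ∈ Finset.range (N+1),
      pCoef (m j) n * ((X i j ω).descFactorial n : ℝ)) ∂ (P i) = G N i := by
    intro N i
    rw [hg_expand N i, integral_finset_sum _ (fun n _ => (hint i n).const_mul _)]
    exact Finset.sum_congr rfl fun n _ => integral_const_mul _ _
  -- the indicator
  have hmeas : ∀ i, MeasurableSet {ω | ∀ j, X i j ω = m j} := by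
    intro i
    have : {ω | ∀ j, X i j ω = m j} = ⋂ j, X i j ⁻¹' {m j} := by
      ext ω; simp [Set.mem_iInter]
    rw [this]
    exact MeasurableSet.iInter fun j => (hX i j) (measurableSet_singleton _)
  have hu_eq : ∀ i, (fun ω => ∏ j, (if X i j ω = m j then (1:ℝ) else 0))
      = Set.indicator {ω | ∀ j, X i j ω = m j} (fun _ => (1:ℝ)) := by
    intro i
    funext ω
    rw [Finset.prod_boole]
    simp [Set.indicator_apply]
  have hu_int : ∀ i, Integrable (fun ω => ∏ j, (if X i j ω = m j then (1:ℝ) else 0)) (P i) := by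
    intro i
    rw [hu_eq i]
    exact (integrable_const 1).indicator (hmeas i)
  have hf_eq : ∀ i, ((P i) {ω | ∀ j, X i j ω = m j}).toReal
      = ∫ ω, (∏ j, (if X i j ω = m j then (1:ℝ) else 0)) ∂ (P i) := by
    intro i
    rw [hu_eq i, integral_indicator_const (1:ℝ) (hmeas i)]
    simp
    rfl
  -- the error bound integrand
  have hbound_int : ∀ N i, Integrable (fun ω => ∑ S ∈ Pw, (∏ j ∈ S, B N j) *
      ∏ j, ((X i j ω).descFactorial (nn N S j) : ℝ)) (P i) :=
    fun N i => integrable_finset_sum _ fun S _ => (hint i (nn N S)).const_mul _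
  have hH_eq : ∀ N i, H N i = ∫ ω, (∑ S ∈ Pw, (∏ j ∈ S, B N j) *
      ∏ j, ((X i j ω).descFactorial (nn N S j) : ℝ)) ∂ (P i) := by
    intro N i
    rw [integral_finset_sum _ (fun S _ => (hint i (nn N S)).const_mul _)]
    exact Finset.sum_congr rfl fun S _ => (integral_const_mul _ _).symm
  -- pointwise bound
  have hptwise : ∀ N, (∀ j, m j ≤ N) → ∀ i ω,
      |(∏ j, ∑ n ∈ Finset.range (N+1), pCoef (m j) n * ((X i j ω).descFactorial n : ℝ))
        - ∏ j, (if X i j ω = m j then (1:ℝ) else 0)|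
      ≤ ∑ S ∈ Pw, (∏ j ∈ S, B N j) * ∏ j, ((X i j ω).descFactorial (nn N S j) : ℝ) := by
    intro N hmN i ω
    set u : Fin k → ℝ := fun j => if X i j ω = m j then (1:ℝ) else 0 with hu
    set e : Fin k → ℝ := fun j =>
      (∑ n ∈ Finset.range (N+1), pCoef (m j) n * ((X i j ω).descFactorial n : ℝ)) - u j with he
    have hge : ∀ j, (∑ n ∈ Finset.range (N+1), pCoef (m j) n * ((X i j ω).descFactorial n : ℝ))
        = e j + u j := fun j => by rw [he]; ring
    have hexp : ∏ j, (e j + u j)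
        = ∑ S ∈ (Finset.univ : Finset (Fin k)).powerset, (∏ j ∈ S, e j) * ∏ j ∈ Finset.univ \ S, u j :=
      Finset.prod_add e u Finset.univ
    have hsplit : ∑ S ∈ (Finset.univ : Finset (Fin k)).powerset,
          (∏ j ∈ S, e j) * ∏ j ∈ Finset.univ \ S, u j
        = (∏ j, u j) + ∑ S ∈ Pw, (∏ j ∈ S, e j) * ∏ j ∈ Finset.univ \ S, u j := by
      rw [← Finset.add_sum_erase _ _ (Finset.empty_mem_powerset _)]
      simp [hPw]
    have hdiff_eq : (∏ j, ∑ n ∈ Finset.range (N+1), pCoef (m j) n * ((X i j ω).descFactorial n : ℝ))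
        - ∏ j, u j = ∑ S ∈ Pw, (∏ j ∈ S, e j) * ∏ j ∈ Finset.univ \ S, u j := by
      rw [Finset.prod_congr rfl fun j _ => hge j, hexp, hsplit]
      ring
    rw [hdiff_eq]
    calc |∑ S ∈ Pw, (∏ j ∈ S, e j) * ∏ j ∈ Finset.univ \ S, u j|
        ≤ ∑ S ∈ Pw, |(∏ j ∈ S, e j) * ∏ j ∈ Finset.univ \ S, u j| :=
          Finset.abs_sum_le_sum_abs _ _
      _ ≤ ∑ S ∈ Pw, (∏ j ∈ S, B N j) * ∏ j, ((X i j ω).descFactorial (nn N S j) : ℝ) := by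
          refine Finset.sum_le_sum fun S _ => ?_
          rw [abs_mul, Finset.abs_prod, Finset.abs_prod]
          have h1 : ∏ j ∈ Finset.univ \ S, |u j| ≤ 1 := by
            refine Finset.prod_le_one (fun j _ => abs_nonneg _) (fun j _ => ?_)
            rw [hu]
            dsimp only
            split <;> simp
          have h2 : ∏ j ∈ S, |e j| ≤ ∏ j ∈ S, (B N j * ((X i j ω).descFactorial (N+1) : ℝ)) := by
            refine Finset.prod_le_prod (fun j _ => abs_nonneg _) (fun j _ => ?_)
            exact pCoef_bound (m j) N (X i j ω) (hmN j)
          have h3 : ∏ j ∈ S, (B N j * ((X i j ω).descFactorial (N+1) : ℝ))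
              = (∏ j ∈ S, B N j) * ∏ j, ((X i j ω).descFactorial (nn N S j) : ℝ) := by
            rw [Finset.prod_mul_distrib]
            congr 1
            have h4 : ∏ j ∈ S, ((X i j ω).descFactorial (nn N S j) : ℝ)
                = ∏ j, ((X i j ω).descFactorial (nn N S j) : ℝ) :=
              Finset.prod_subset (Finset.subset_univ S) (fun j _ hj => by simp [hnn, hj])
            rw [← h4]
            exact Finset.prod_congr rfl fun j hj => by simp [hnn, hj]
          have h5 : (0:ℝ) ≤ ∏ j ∈ S, (B N j * ((X i j ω).descFactorial (N+1) : ℝ)) := by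
            refine Finset.prod_nonneg fun j _ => mul_nonneg ?_ (by positivity)
            rw [hB]; positivity
          calc (∏ j ∈ S, |e j|) * ∏ j ∈ Finset.univ \ S, |u j|
              ≤ (∏ j ∈ S, (B N j * ((X i j ω).descFactorial (N+1) : ℝ))) * 1 :=
                mul_le_mul h2 h1 (Finset.prod_nonneg fun j _ => abs_nonneg _) h5
            _ = (∏ j ∈ S, B N j) * ∏ j, ((X i j ω).descFactorial (nn N S j) : ℝ) := by
                rw [mul_one, h3]
  -- main difference bound
  have hdiff : ∀ N, (∀ j, m j ≤ N) → ∀ i,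
      |((P i) {ω | ∀ j, X i j ω = m j}).toReal - G N i| ≤ H N i := by
    intro N hmN i
    rw [hf_eq i, ← hg_integral N i, hH_eq N i,
      ← integral_sub (hu_int i) (hg_int N i)]
    calc |∫ ω, ((∏ j, (if X i j ω = m j then (1:ℝ) else 0)) -
            ∏ j, ∑ n ∈ Finset.range (N+1), pCoef (m j) n * ((X i j ω).descFactorial n : ℝ)) ∂ (P i)|
        ≤ ∫ ω, |(∏ j, (if X i j ω = m j then (1:ℝ) else 0)) -
            ∏ j, ∑ n ∈ Finset.range (N+1), pCoef (m j) n * ((X i j ω).descFactorial n : ℝ)| ∂ (P i) := by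
          simpa [Real.norm_eq_abs] using
            norm_integral_le_integral_norm (μ := P i)
              (f := fun ω => (∏ j, (if X i j ω = m j then (1:ℝ) else 0)) -
                ∏ j, ∑ n ∈ Finset.range (N+1), pCoef (m j) n * ((X i j ω).descFactorial n : ℝ))
      _ ≤ ∫ ω, (∑ S ∈ Pw, (∏ j ∈ S, B N j) *
            ∏ j, ((X i j ω).descFactorial (nn N S j) : ℝ)) ∂ (P i) := by
          refine integral_mono ((hu_int i).sub (hg_int N i)).abs (hbound_int N i) (fun ω => ?_)
          simpa [abs_sub_comm] using hptwise N hmN i ω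
  -- final assembly
  rw [Metric.tendsto_atTop]
  intro ε hε
  have hε4 : 0 < ε / 4 := by linarith
  obtain ⟨N₁, hN₁⟩ := Metric.tendsto_atTop.1 herrlim (ε/4) hε4
  obtain ⟨N₂, hN₂⟩ := Metric.tendsto_atTop.1 hTlim (ε/4) hε4
  set N := max (max N₁ N₂) (Finset.univ.sup m) with hNdef
  have hmN : ∀ j, m j ≤ N := fun j =>
    le_trans (Finset.le_sup (Finset.mem_univ j)) (le_max_right _ _)
  have herrN : |err N| < ε/4 := by
    have := hN₁ N (le_trans (le_max_left _ _) (le_max_left _ _))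
    rwa [Real.dist_eq, sub_zero] at this
  have hTN : |T N - L| < ε/4 := by
    have := hN₂ N (le_trans (le_max_right _ _) (le_max_left _ _))
    rwa [Real.dist_eq] at this
  obtain ⟨I₁, hI₁⟩ := Metric.tendsto_atTop.1 (hGlim N) (ε/4) hε4
  obtain ⟨I₂, hI₂⟩ := Metric.tendsto_atTop.1 (hHlim N) (ε/4) hε4
  refine ⟨max I₁ I₂, fun i hi => ?_⟩
  have h1 : |G N i - T N| < ε/4 := by
    have := hI₁ i (le_trans (le_max_left _ _) hi)
    rwa [Real.dist_eq] at this
  have h2 : |H N i - err N| < ε/4 := by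
    have := hI₂ i (le_trans (le_max_right _ _) hi)
    rwa [Real.dist_eq] at this
  have h3 := hdiff N hmN i
  have h4 : H N i < ε/2 := by
    have e1 : err N < ε/4 := lt_of_le_of_lt (le_abs_self _) herrN
    have e2 : H N i - err N ≤ |H N i - err N| := le_abs_self _
    linarith
  rw [Real.dist_eq]
  have t1 : |((P i) {ω | ∀ j, X i j ω = m j}).toReal - T N|
      ≤ |((P i) {ω | ∀ j, X i j ω = m j}).toReal - G N i| + |G N i - T N| := abs_sub_le _ _ _
  have t2 : |((P i) {ω | ∀ j, X i j ω = m j}).toReal - L|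
      ≤ |((P i) {ω | ∀ j, X i j ω = m j}).toReal - T N| + |T N - L| := abs_sub_le _ _ _
  linarith
end

section
/- Let λ ∈ (0, ∞) and let p : ℕ → ℝ be a probability mass function on ℕ (so p(k) ≥ 0 for all k and ∑_{k=0}^∞ p(k) = 1). Then the following are equivalent: (i) p(k) = λ^k e^{-λ}/k! for all k ∈ ℕ; (ii) for every n ∈ ℕ the series ∑_{k=0}^∞ (k)_n · p(k) converges with sum λ^n. In other words, an ℕ-valued random variable is Poisson distributed with mean λ if and only if its n-th factorial moment equals λ^n for all n ∈ ℕ. -/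
open Finset

private lemma hasSum_exp_real (x : ℝ) :
    HasSum (fun n : ℕ => x ^ n / n.factorial) (Real.exp x) := by
  rw [Real.exp_eq_exp_ℝ]
  exact NormedSpace.expSeries_div_hasSum_exp x

private lemma choose_le_two_pow' (m j : ℕ) : m.choose j ≤ 2 ^ m := by
  rcases le_or_gt j m with h | h
  · calc m.choose j ≤ ∑ i ∈ range (m + 1), m.choose i :=
      Finset.single_le_sum (fun i _ => Nat.zero_le _) (mem_range.2 (Nat.lt_succ_of_le h))
    _ = 2 ^ m := Nat.sum_range_choose m
  · simp [Nat.choose_eq_zero_of_lt h]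

private lemma alt_sum (j k : ℕ) :
    ∑ n ∈ range (k + 1), ((-1 : ℝ) ^ n * ((n + j).choose j) * (k.choose (n + j)))
      = if k = j then 1 else 0 := by
  rcases lt_or_ge k j with h | h
  · rw [if_neg (by omega)]
    refine Finset.sum_eq_zero fun n _ => ?_
    have : k.choose (n + j) = 0 := Nat.choose_eq_zero_of_lt (by omega)
    rw [this]
    simp
  · have hsub : range (k - j + 1) ⊆ range (k + 1) := by
      apply Finset.range_subset_range.2; omega
    rw [← Finset.sum_subset hsub (by
      intro n hn hn'
      simp only [mem_range] at hn hn'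
      have : k.choose (n + j) = 0 := Nat.choose_eq_zero_of_lt (by omega)
      rw [this]
      simp)]
    have key : ∀ n ∈ range (k - j + 1),
        ((-1 : ℝ) ^ n * ((n + j).choose j) * (k.choose (n + j)))
          = (k.choose j : ℝ) * ((-1 : ℝ) ^ n * ((k - j).choose n)) := by
      intro n hn
      simp only [mem_range] at hn
      have h1 : n + j ≤ k := by omega
      have hc := Nat.choose_mul (n := k) (k := n + j) (s := j) (Nat.le_add_left _ _)
      have h2 : n + j - j = n := by omega
      rw [h2] at hc
      have hcr := congrArg (fun z : ℕ => (z : ℝ)) hc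
      push_cast at hcr
      linear_combination ((-1 : ℝ) ^ n) * hcr
    rw [Finset.sum_congr rfl key, ← Finset.mul_sum]
    have halt : ∑ n ∈ range (k - j + 1), ((-1 : ℝ) ^ n * ((k - j).choose n))
        = if k - j = 0 then 1 else 0 := by
      have h := Int.alternating_sum_range_choose (n := k - j)
      have h2 := congrArg (fun z : ℤ => (z : ℝ)) h
      push_cast at h2
      simpa using h2
    rw [halt]
    rcases eq_or_ne k j with rfl | hne
    · simp
    · rw [if_neg (by omega), if_neg hne, mul_zero]

private lemma poisson_forward (lam : ℝ) (n : ℕ) :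
    HasSum (fun k : ℕ => (k.descFactorial n : ℝ) *
      (lam ^ k * Real.exp (-lam) / k.factorial)) (lam ^ n) := by
  have hexp : HasSum (fun k : ℕ => lam ^ k / k.factorial * Real.exp (-lam)) 1 := by
    have := (hasSum_exp_real lam).mul_right (Real.exp (-lam))
    simpa [← Real.exp_add] using this
  have h2 := hexp.mul_left (lam ^ n)
  rw [mul_one] at h2
  set f : ℕ → ℝ := fun k => (k.descFactorial n : ℝ) * (lam ^ k * Real.exp (-lam) / k.factorial)
    with hf
  have heq : (fun k : ℕ => lam ^ n * (lam ^ k / k.factorial * Real.exp (-lam)))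
      = fun k => f (k + n) := by
    funext k
    have hd : ((k + n).descFactorial n : ℝ) * (k.factorial : ℝ) = ((k + n).factorial : ℝ) := by
      have : (k + n).descFactorial n * k.factorial = (k + n).factorial := by
        rw [Nat.descFactorial_eq_factorial_mul_choose]
        have := Nat.choose_mul_factorial_mul_factorial (n := k + n) (k := n) (Nat.le_add_left _ _)
        simp only [Nat.add_sub_cancel] at this
        rw [← this]; ring
      exact_mod_cast this
    have hkfac : (k.factorial : ℝ) ≠ 0 := by exact_mod_cast k.factorial_ne_zero
    have hknfac : ((k + n).factorial : ℝ) ≠ 0 := by exact_mod_cast (k + n).factorial_ne_zero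
    rw [hf]
    field_simp
    rw [pow_add]
    linear_combination (-(lam ^ n * lam ^ k)) * hd
  rw [heq] at h2
  have h3 := (hasSum_nat_add_iff (f := f) n).1 h2
  have hz : ∑ i ∈ range n, f i = 0 := by
    refine Finset.sum_eq_zero fun i hi => ?_
    rw [hf]
    simp only []
    rw [Nat.descFactorial_eq_zero_iff_lt.2 (mem_range.1 hi)]
    simp
  rw [hz, add_zero] at h3
  exact h3

section
variable {lam : ℝ} {p : ℕ → ℝ}

private lemma momC (hM : ∀ n, HasSum (fun k : ℕ => (k.descFactorial n : ℝ) * p k) (lam ^ n))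
    (n : ℕ) : HasSum (fun k : ℕ => (k.choose n : ℝ) * p k) (lam ^ n / n.factorial) := by
  have h := (hM n).div_const (n.factorial : ℝ)
  have hfac : (n.factorial : ℝ) ≠ 0 := by exact_mod_cast n.factorial_ne_zero
  have heq : (fun k : ℕ => ((k.descFactorial n : ℝ) * p k) / n.factorial)
      = fun k : ℕ => (k.choose n : ℝ) * p k := by
    funext k
    rw [Nat.descFactorial_eq_factorial_mul_choose]
    push_cast
    field_simp
  rwa [heq] at h

private lemma GS (hp : ∀ k, 0 ≤ p k)
    (hM : ∀ n, HasSum (fun k : ℕ => (k.descFactorial n : ℝ) * p k) (lam ^ n)) :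
    Summable (fun q : ℕ × ℕ => (q.2.choose q.1 : ℝ) * 2 ^ q.1 * p q.2) := by
  set G : ℕ × ℕ → ℝ := fun q => (q.2.choose q.1 : ℝ) * 2 ^ q.1 * p q.2 with hG
  have hG0 : 0 ≤ G := fun q =>
    mul_nonneg (mul_nonneg (Nat.cast_nonneg _) (by positivity)) (hp _)
  have hrow : ∀ n : ℕ, HasSum (fun k => G (n, k)) ((2 : ℝ) ^ n * (lam ^ n / n.factorial)) := by
    intro n
    have h := (momC hM n).mul_left ((2 : ℝ) ^ n)
    have heq : (fun k : ℕ => (2 : ℝ) ^ n * ((k.choose n : ℝ) * p k)) = fun k => G (n, k) := by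
      funext k; simp only [hG]; ring
    rwa [heq] at h
  have hsum2 : Summable (fun n : ℕ => (2 : ℝ) ^ n * (lam ^ n / n.factorial)) := by
    refine (hasSum_exp_real (2 * lam)).summable.congr fun n => ?_
    rw [mul_pow]; ring
  rw [summable_prod_of_nonneg hG0]
  refine ⟨fun n => (hrow n).summable, ?_⟩
  have heq : (fun n : ℕ => ∑' k, G (n, k)) = fun n => (2 : ℝ) ^ n * (lam ^ n / n.factorial) :=
    funext fun n => (hrow n).tsum_eq
  rw [heq]; exact hsum2

set_option maxHeartbeats 1000000 in
private lemma poisson_backward (hp : ∀ k, 0 ≤ p k)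
    (hM : ∀ n, HasSum (fun k : ℕ => (k.descFactorial n : ℝ) * p k) (lam ^ n)) (j : ℕ) :
    p j = lam ^ j * Real.exp (-lam) / j.factorial := by
  set F : ℕ × ℕ → ℝ := fun q =>
    (-1 : ℝ) ^ q.1 * (((q.1 + j).choose j : ℕ) : ℝ) * ((q.2.choose (q.1 + j) : ℕ) : ℝ) * p q.2
    with hF
  -- Summability of F
  have hGshift : Summable (fun q : ℕ × ℕ => ((q.2.choose (q.1 + j) : ℕ) : ℝ) * 2 ^ (q.1 + j) * p q.2) := by
    have hinj : Function.Injective (fun q : ℕ × ℕ => (q.1 + j, q.2)) := by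
      intro a b hab
      simp only [Prod.mk.injEq] at hab
      exact Prod.ext (by omega) hab.2
    have h := (GS hp hM).comp_injective hinj
    exact h.congr fun q => rfl
  have hFabs : Summable fun q : ℕ × ℕ => |F q| := by
    refine Summable.of_nonneg_of_le (fun q => abs_nonneg _) (fun q => ?_) hGshift
    have habs : |F q| = (((q.1 + j).choose j : ℕ) : ℝ) * ((q.2.choose (q.1 + j) : ℕ) : ℝ) * p q.2 := by
      rw [hF]
      rw [abs_mul, abs_mul, abs_mul, abs_pow, abs_neg, abs_one, one_pow, one_mul,
        Nat.abs_cast, Nat.abs_cast, abs_of_nonneg (hp _)]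
    rw [habs]
    have hb : (((q.1 + j).choose j : ℕ) : ℝ) ≤ (2 : ℝ) ^ (q.1 + j) := by
      have := choose_le_two_pow' (q.1 + j) j
      exact_mod_cast this
    have h1 : (0 : ℝ) ≤ ((q.2.choose (q.1 + j) : ℕ) : ℝ) := Nat.cast_nonneg _
    calc (((q.1 + j).choose j : ℕ) : ℝ) * ((q.2.choose (q.1 + j) : ℕ) : ℝ) * p q.2
        ≤ (2 : ℝ) ^ (q.1 + j) * ((q.2.choose (q.1 + j) : ℕ) : ℝ) * p q.2 := by
          apply mul_le_mul_of_nonneg_right _ (hp _)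
          exact mul_le_mul_of_nonneg_right hb h1
      _ = ((q.2.choose (q.1 + j) : ℕ) : ℝ) * 2 ^ (q.1 + j) * p q.2 := by ring
  have hFsum : Summable F := summable_abs_iff.mp hFabs
  -- First evaluation: iterated sum over n then k
  have hinner1 : ∀ n : ℕ, HasSum (fun k => F (n, k))
      ((-1 : ℝ) ^ n * (((n + j).choose j : ℕ) : ℝ) * (lam ^ (n + j) / (n + j).factorial)) := by
    intro n
    have h := (momC hM (n + j)).mul_left ((-1 : ℝ) ^ n * (((n + j).choose j : ℕ) : ℝ))
    have heq : (fun k : ℕ => ((-1 : ℝ) ^ n * (((n + j).choose j : ℕ) : ℝ)) *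
        ((k.choose (n + j) : ℝ) * p k)) = fun k => F (n, k) := by
      funext k; rw [hF]; ring
    rwa [heq] at h
  have houter1 : HasSum
      (fun n : ℕ => (-1 : ℝ) ^ n * (((n + j).choose j : ℕ) : ℝ) * (lam ^ (n + j) / (n + j).factorial))
      (lam ^ j * Real.exp (-lam) / j.factorial) := by
    have h := (hasSum_exp_real (-lam)).mul_left (lam ^ j / j.factorial)
    have heq : (fun n : ℕ => lam ^ j / j.factorial * ((-lam) ^ n / n.factorial))
        = fun n : ℕ => (-1 : ℝ) ^ n * (((n + j).choose j : ℕ) : ℝ)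
          * (lam ^ (n + j) / (n + j).factorial) := by
      funext n
      have hcf : (((n + j).choose j : ℕ) : ℝ) * (n.factorial : ℝ) * (j.factorial : ℝ)
          = ((n + j).factorial : ℝ) := by
        have := Nat.choose_mul_factorial_mul_factorial (n := n + j) (k := j) (Nat.le_add_left _ _)
        simp only [Nat.add_sub_cancel] at this
        exact_mod_cast by rw [← this]; ring
      have h1 : (n.factorial : ℝ) ≠ 0 := by exact_mod_cast n.factorial_ne_zero
      have h2 : (j.factorial : ℝ) ≠ 0 := by exact_mod_cast j.factorial_ne_zero
      have h3 : ((n + j).factorial : ℝ) ≠ 0 := by exact_mod_cast (n + j).factorial_ne_zero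
      rw [neg_pow lam n, pow_add]
      field_simp
      linear_combination (-(lam ^ n * lam ^ j)) * hcf
    rw [heq] at h
    convert h using 1
    · rfl
    ring
  have hval1 : ∑' q : ℕ × ℕ, F q = lam ^ j * Real.exp (-lam) / j.factorial := by
    rw [Summable.tsum_prod hFsum]
    calc ∑' (n : ℕ) (k : ℕ), F (n, k)
        = ∑' n : ℕ, ((-1 : ℝ) ^ n * (((n + j).choose j : ℕ) : ℝ)
            * (lam ^ (n + j) / (n + j).factorial)) := by
          exact tsum_congr fun n => (hinner1 n).tsum_eq
      _ = lam ^ j * Real.exp (-lam) / j.factorial := houter1.tsum_eq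
  -- Second evaluation: iterated sum over k then n
  have hval2 : ∑' q : ℕ × ℕ, F q = p j := by
    have hswap : ∑' q : ℕ × ℕ, F q = ∑' q : ℕ × ℕ, F q.swap := by
      rw [← (Equiv.prodComm ℕ ℕ).tsum_eq (fun q : ℕ × ℕ => F q.swap)]
      exact tsum_congr fun q => by simp
    rw [hswap, Summable.tsum_prod hFsum.prod_symm]
    have hinner2 : ∀ k : ℕ, ∑' n : ℕ, F (n, k) = (if k = j then 1 else 0) * p k := by
      intro k
      have hfin : ∑' n : ℕ, F (n, k) = ∑ n ∈ range (k + 1), F (n, k) := by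
        refine tsum_eq_sum fun n hn => ?_
        simp only [mem_range, not_lt] at hn
        rw [hF]
        have : k.choose (n + j) = 0 := Nat.choose_eq_zero_of_lt (by omega)
        simp only [this]
        simp
      rw [hfin]
      have : ∑ n ∈ range (k + 1), F (n, k)
          = (∑ n ∈ range (k + 1), ((-1 : ℝ) ^ n * ((n + j).choose j) * (k.choose (n + j)))) * p k := by
        rw [Finset.sum_mul]
      rw [this, alt_sum j k]
    calc ∑' (k : ℕ) (n : ℕ), F (n, k) = ∑' k : ℕ, (if k = j then 1 else 0) * p k :=
        tsum_congr hinner2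
      _ = p j := by
        rw [tsum_eq_single j (fun k hk => by rw [if_neg hk, zero_mul])]
        rw [if_pos rfl, one_mul]
  rw [← hval2, hval1]

end

/-- An `ℕ`-valued random variable is Poisson distributed with mean `λ` if and only if its
`n`-th factorial moment equals `λ^n` for all `n`. -/
theorem poisson_iff_factorial_moments (lam : ℝ) (hlam : 0 < lam)
    (p : ℕ → ℝ) (hp : ∀ k, 0 ≤ p k) (hsum : HasSum p 1) :
    (∀ k : ℕ, p k = lam ^ k * Real.exp (-lam) / k.factorial) ↔
    (∀ n : ℕ, HasSum (fun k : ℕ => (k.descFactorial n : ℝ) * p k) (lam ^ n)) := by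
  constructor
  · intro h n
    have heq : (fun k : ℕ => (k.descFactorial n : ℝ) * p k)
        = fun k : ℕ => (k.descFactorial n : ℝ) * (lam ^ k * Real.exp (-lam) / k.factorial) := by
      funext k; rw [h k]
    rw [heq]
    exact poisson_forward lam n
  · intro hM k
    exact poisson_backward hp hM k
end

section
/- Let q ≥ 1 and K be natural numbers and let n₁, …, n_q ∈ ℕ \ {0} satisfy ∑_{i=1}^q n_i = 2K. Then there exists a constant C > 0 such that for every natural number g ≥ K + 2, the sum over all tuples (g₁, …, g_q) ∈ ℕ^q with ∑_{i=1}^q g_i = g + q - K - 1 and 2g_i - 3 + n_i ≥ 0 for all i = 1, …, q of the products ∏_{i=1}^q (2g_i - 3 + n_i)^{(2g_i - 3 + n_i)} is at most C · (2g - 3)^{(2g-3)} / g^{q-1}. Here the convention 0^0 = 1 is used. -/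
open Finset

private lemma halfpow_pair_le (a b : ℕ) (h : a ≤ b) :
    (a:ℝ)^a * (b:ℝ)^b ≤ ((a+b:ℕ):ℝ)^(a+b) * (1/2)^a := by
  have hab : (a:ℝ) ≤ b := by exact_mod_cast h
  have h1 : (a:ℝ)^a ≤ (((a:ℝ)+b)/2)^a := by
    apply pow_le_pow_left₀ (by positivity)
    linarith
  have h2 : (b:ℝ)^b ≤ ((a:ℝ)+b)^b := by
    apply pow_le_pow_left₀ (by positivity)
    have : (0:ℝ) ≤ a := Nat.cast_nonneg a
    linarith
  calc (a:ℝ)^a * (b:ℝ)^b ≤ (((a:ℝ)+b)/2)^a * ((a:ℝ)+b)^b :=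
        mul_le_mul h1 h2 (by positivity) (by positivity)
    _ = ((a+b:ℕ):ℝ)^(a+b) * (1/2)^a := by
        push_cast
        rw [div_pow, pow_add]
        simp only [one_div, inv_pow]
        simp only [div_eq_mul_inv]
        generalize ((2:ℝ)^a)⁻¹ = t
        ring

private lemma pair_bound (a b : ℕ) :
    (a:ℝ)^a * (b:ℝ)^b ≤ ((a+b:ℕ):ℝ)^(a+b) * ((1/2:ℝ)^a + (1/2)^b) := by
  have hnn : (0:ℝ) ≤ ((a+b:ℕ):ℝ)^(a+b) := by positivity
  rcases le_total a b with h | h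
  · calc (a:ℝ)^a * (b:ℝ)^b ≤ ((a+b:ℕ):ℝ)^(a+b) * (1/2)^a := halfpow_pair_le a b h
      _ ≤ ((a+b:ℕ):ℝ)^(a+b) * ((1/2:ℝ)^a + (1/2)^b) := by
          apply mul_le_mul_of_nonneg_left _ hnn
          have : (0:ℝ) ≤ (1/2:ℝ)^b := by positivity
          linarith
  · have := halfpow_pair_le b a h
    rw [Nat.add_comm b a] at this
    calc (a:ℝ)^a * (b:ℝ)^b = (b:ℝ)^b * (a:ℝ)^a := by ring
      _ ≤ ((a+b:ℕ):ℝ)^(a+b) * (1/2)^b := this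
      _ ≤ ((a+b:ℕ):ℝ)^(a+b) * ((1/2:ℝ)^a + (1/2)^b) := by
          apply mul_le_mul_of_nonneg_left _ hnn
          have : (0:ℝ) ≤ (1/2:ℝ)^a := by positivity
          linarith

private lemma geom_le_two (N : ℕ) : ∑ i ∈ range N, ((1/2:ℝ))^i ≤ 2 := by
  have := geom_sum_eq (show (1/2:ℝ) ≠ 1 by norm_num) N
  rw [this]
  have h0 : (0:ℝ) ≤ (1/2:ℝ)^N := by positivity
  have h1 : ((1/2:ℝ)^N - 1)/((1:ℝ)/2 - 1) = 2 - 2*(1/2)^N := by ring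
  rw [h1]
  linarith

private lemma geom4 (M : ℕ) :
    ∑ a ∈ range (M+1), (((1/2:ℝ))^a + (1/2)^(M-a)) ≤ 4 := by
  rw [Finset.sum_add_distrib]
  have h2 : ∑ a ∈ range (M+1), ((1/2:ℝ))^(M-a) = ∑ a ∈ range (M+1), ((1/2:ℝ))^a := by
    have := Finset.sum_range_reflect (fun j => ((1/2:ℝ))^j) (M+1)
    simpa using this
  rw [h2]
  have := geom_le_two (M+1)
  linarith

private lemma sum_antidiagonalTuple_succ {k n : ℕ} (f : (Fin (k+1) → ℕ) → ℝ) :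
    ∑ x ∈ Finset.Nat.antidiagonalTuple (k+1) n, f x
      = ∑ p ∈ ((Finset.HasAntidiagonal.antidiagonal n : Finset (ℕ × ℕ))).sigma
          (fun p => Finset.Nat.antidiagonalTuple k p.2), f (Fin.cons (α := fun _ => ℕ) p.1.1 p.2) := by
  apply Finset.sum_nbij' (i := fun x => (⟨(x 0, ∑ i, Fin.tail x i), Fin.tail x⟩ :
      (p : ℕ × ℕ) × (Fin k → ℕ)))
    (j := fun p => Fin.cons (α := fun _ => ℕ) p.1.1 p.2)
  · intro x hx
    rw [Finset.Nat.mem_antidiagonalTuple] at hx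
    rw [Finset.mem_sigma]
    constructor
    · rw [Finset.HasAntidiagonal.mem_antidiagonal]
      rw [Fin.sum_univ_succ] at hx
      exact hx
    · exact Finset.Nat.mem_antidiagonalTuple.mpr rfl
  · intro p hp
    rw [Finset.mem_sigma] at hp
    rw [Finset.Nat.mem_antidiagonalTuple, Fin.sum_cons,
      Finset.Nat.mem_antidiagonalTuple.mp hp.2]
    exact Finset.HasAntidiagonal.mem_antidiagonal.mp hp.1
  · intro x _
    exact Fin.cons_self_tail x
  · intro p hp
    rw [Finset.mem_sigma] at hp
    have h2 : ∑ i, Fin.tail (Fin.cons (α := fun _ => ℕ) p.1.1 p.2) i = p.1.2 := by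
      rw [Fin.tail_cons]
      exact Finset.Nat.mem_antidiagonalTuple.mp hp.2
    have h3 : ∑ x, p.2 x = p.1.2 := Finset.Nat.mem_antidiagonalTuple.mp hp.2
    refine Sigma.ext ?_ ?_
    · simp only [Fin.cons_zero, h2]
    · simp [Fin.tail_cons]
  · intro x _
    rw [Fin.cons_self_tail x]

private lemma tuple_sum_bound (k : ℕ) : ∀ M : ℕ,
    ∑ gs ∈ Finset.Nat.antidiagonalTuple (k+1) M, ∏ i, ((gs i : ℝ))^(gs i)
      ≤ 4^k * (M:ℝ)^M := by
  induction k with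
  | zero =>
    intro M
    simp [Finset.Nat.antidiagonalTuple_one]
  | succ k ih =>
    intro M
    rw [sum_antidiagonalTuple_succ, Finset.sum_sigma]
    have step : ∀ p ∈ (Finset.HasAntidiagonal.antidiagonal M : Finset (ℕ × ℕ)),
        (∑ y ∈ Finset.Nat.antidiagonalTuple (k+1) p.2,
          ∏ i, ((Fin.cons (α := fun _ => ℕ) p.1 y i : ℕ):ℝ)^(Fin.cons (α := fun _ => ℕ) p.1 y i : ℕ))
        ≤ 4^k * ((M:ℝ)^M * ((1/2:ℝ)^p.1 + (1/2)^p.2)) := by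
      intro p hp
      have hpsum : p.1 + p.2 = M := Finset.HasAntidiagonal.mem_antidiagonal.mp hp
      have : (∑ y ∈ Finset.Nat.antidiagonalTuple (k+1) p.2,
          ∏ i, ((Fin.cons (α := fun _ => ℕ) p.1 y i : ℕ):ℝ)^(Fin.cons (α := fun _ => ℕ) p.1 y i : ℕ))
          = (p.1:ℝ)^p.1 * ∑ y ∈ Finset.Nat.antidiagonalTuple (k+1) p.2,
              ∏ i, ((y i : ℝ))^(y i) := by
        rw [Finset.mul_sum]
        apply Finset.sum_congr rfl
        intro y _
        rw [Fin.prod_univ_succ]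
        simp [Fin.cons_zero, Fin.cons_succ]
      rw [this]
      calc (p.1:ℝ)^p.1 * ∑ y ∈ Finset.Nat.antidiagonalTuple (k+1) p.2,
              ∏ i, ((y i : ℝ))^(y i)
          ≤ (p.1:ℝ)^p.1 * (4^k * (p.2:ℝ)^p.2) := by
            apply mul_le_mul_of_nonneg_left (ih p.2) (by positivity)
        _ = 4^k * ((p.1:ℝ)^p.1 * (p.2:ℝ)^p.2) := by ring
        _ ≤ 4^k * ((M:ℝ)^M * ((1/2:ℝ)^p.1 + (1/2)^p.2)) := by
            apply mul_le_mul_of_nonneg_left _ (by positivity)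
            have := pair_bound p.1 p.2
            rw [hpsum] at this
            exact this
    calc (∑ p ∈ (Finset.HasAntidiagonal.antidiagonal M : Finset (ℕ × ℕ)),
          ∑ y ∈ Finset.Nat.antidiagonalTuple (k+1) p.2,
            ∏ i, ((Fin.cons (α := fun _ => ℕ) p.1 y i : ℕ):ℝ)^(Fin.cons (α := fun _ => ℕ) p.1 y i : ℕ))
        ≤ ∑ p ∈ (Finset.HasAntidiagonal.antidiagonal M : Finset (ℕ × ℕ)),
            4^k * ((M:ℝ)^M * ((1/2:ℝ)^p.1 + (1/2)^p.2)) := Finset.sum_le_sum step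
      _ = 4^k * (M:ℝ)^M * ∑ p ∈ (Finset.HasAntidiagonal.antidiagonal M : Finset (ℕ × ℕ)),
            ((1/2:ℝ)^p.1 + (1/2)^p.2) := by rw [Finset.mul_sum]; apply Finset.sum_congr rfl; intros; ring
      _ ≤ 4^k * (M:ℝ)^M * 4 := by
          apply mul_le_mul_of_nonneg_left _ (by positivity)
          rw [Finset.Nat.sum_antidiagonal_eq_sum_range_succ_mk]
          exact geom4 M
      _ = 4^(k+1) * (M:ℝ)^M := by ring

/-- The combinatorial estimate behind `∑ V_{g₁,n₁}⋯V_{g_q,n_q} = O(V_g/g^{q-1})`: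
for `n₁,…,n_q ≥ 1` with `∑ nᵢ = 2K`, there is `C > 0` such that for all `g ≥ K + 2`,
`∑ ∏ᵢ (2gᵢ - 3 + nᵢ)^(2gᵢ - 3 + nᵢ) ≤ C (2g-3)^(2g-3) / g^(q-1)`, the sum being over all
tuples `(g₁,…,g_q) ∈ ℕ^q` with `∑ gᵢ = g + q - K - 1` and `2gᵢ - 3 + nᵢ ≥ 0` for all `i`
(with the convention `0^0 = 1`). -/
theorem sum_products_bound (q K : ℕ) (hq : 1 ≤ q) (n : Fin q → ℕ) (hn : ∀ i, n i ≠ 0)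
    (hsum : ∑ i, n i = 2 * K) :
    ∃ C > (0:ℝ), ∀ g : ℕ, K + 2 ≤ g →
      ∑ gs ∈ (Finset.Nat.antidiagonalTuple q (g + q - K - 1)).filter
          (fun gs => ∀ i, 3 ≤ 2 * gs i + n i),
        (∏ i, ((2 * gs i + n i - 3 : ℕ) : ℝ) ^ (2 * gs i + n i - 3)) ≤
      C * ((2 * g - 3 : ℕ) : ℝ) ^ (2 * g - 3) / (g : ℝ) ^ (q - 1) := by
  obtain ⟨q', rfl⟩ : ∃ q', q = q' + 1 := ⟨q - 1, by omega⟩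
  have hqK : q' + 1 ≤ 2 * K := by
    calc q' + 1 = ∑ _i : Fin (q'+1), 1 := by simp
      _ ≤ ∑ i, n i := Finset.sum_le_sum (fun i _ => Nat.one_le_iff_ne_zero.mpr (hn i))
      _ = 2 * K := hsum
  refine ⟨4^q', by positivity, ?_⟩
  intro g hg
  set M : ℕ := 2*g - q' - 3 with hM
  set s : Finset (Fin (q'+1) → ℕ) :=
    (Finset.Nat.antidiagonalTuple (q'+1) (g + (q'+1) - K - 1)).filter
      (fun gs => ∀ i, 3 ≤ 2 * gs i + n i) with hs
  set F : (Fin (q'+1) → ℕ) → (Fin (q'+1) → ℕ) := fun gs i => 2 * gs i + n i - 3 with hF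
  have hmem : ∀ gs ∈ s, ∀ i, 3 ≤ 2 * gs i + n i := by
    intro gs hgs
    exact (Finset.mem_filter.mp hgs).2
  have hsumF : ∀ gs ∈ s, ∑ i, F gs i = M := by
    intro gs hgs
    have h3 := hmem gs hgs
    have hsg : ∑ i, gs i = g + (q'+1) - K - 1 :=
      Finset.Nat.mem_antidiagonalTuple.mp (Finset.mem_filter.mp hgs).1
    have key : (∑ i, (2*gs i + n i - 3)) + 3*(q'+1) = ∑ i, (2*gs i + n i) := by
      calc (∑ i, (2*gs i + n i - 3)) + 3*(q'+1)
          = ∑ i : Fin (q'+1), ((2*gs i + n i - 3) + 3) := by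
            rw [Finset.sum_add_distrib, Finset.sum_const, Finset.card_univ,
              Fintype.card_fin]; ring
        _ = ∑ i, (2*gs i + n i) := Finset.sum_congr rfl
            (fun i _ => Nat.sub_add_cancel (h3 i))
    have key2 : ∑ i, (2*gs i + n i) = 2*(∑ i, gs i) + 2*K := by
      rw [Finset.sum_add_distrib, ← Finset.mul_sum, hsum]
    rw [hsg] at key2
    rw [key2] at key
    show ∑ i, (2*gs i + n i - 3) = M
    omega
  have hinj : ∀ gs ∈ s, ∀ gs' ∈ s, F gs = F gs' → gs = gs' := by
    intro gs hgs gs' hgs' h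
    have h3 := hmem gs hgs
    have h3' := hmem gs' hgs'
    funext i
    have := congrFun h i
    simp only [hF] at this
    have := h3 i
    have := h3' i
    omega
  have step1 : ∑ gs ∈ s, (∏ i, ((2 * gs i + n i - 3 : ℕ) : ℝ) ^ (2 * gs i + n i - 3))
      ≤ ∑ m ∈ Finset.Nat.antidiagonalTuple (q'+1) M, ∏ i, ((m i : ℝ))^(m i) := by
    have e1 : ∑ gs ∈ s, (∏ i, ((2 * gs i + n i - 3 : ℕ) : ℝ) ^ (2 * gs i + n i - 3))
        = ∑ m ∈ s.image F, ∏ i, ((m i : ℝ))^(m i) := by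
      rw [Finset.sum_image hinj]
    rw [e1]
    apply Finset.sum_le_sum_of_subset_of_nonneg
    · intro m hm
      rw [Finset.mem_image] at hm
      obtain ⟨gs, hgs, rfl⟩ := hm
      exact Finset.Nat.mem_antidiagonalTuple.mpr (hsumF gs hgs)
    · intro m _ _
      positivity
  have step2 := tuple_sum_bound q' M
  have hK1 : 1 ≤ K := by omega
  have hg3 : 3 ≤ g := by omega
  have e2 : M + q' = 2*g - 3 := by omega
  have hMle : (M:ℝ) ≤ ((2*g-3:ℕ):ℝ) := Nat.cast_le.mpr (by omega)
  have hgle : (g:ℝ) ≤ ((2*g-3:ℕ):ℝ) := Nat.cast_le.mpr (by omega)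
  have step3 : (M:ℝ)^M * (g:ℝ)^q' ≤ ((2*g-3:ℕ):ℝ)^(2*g-3) := by
    calc (M:ℝ)^M * (g:ℝ)^q'
        ≤ ((2*g-3:ℕ):ℝ)^M * ((2*g-3:ℕ):ℝ)^q' :=
          mul_le_mul (pow_le_pow_left₀ (by positivity) hMle M)
            (pow_le_pow_left₀ (by positivity) hgle q') (by positivity) (by positivity)
      _ = ((2*g-3:ℕ):ℝ)^(M+q') := (pow_add _ _ _).symm
      _ = ((2*g-3:ℕ):ℝ)^(2*g-3) := by rw [e2]
  have hq1 : q' + 1 - 1 = q' := by omega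
  rw [hq1, div_eq_mul_inv, ← ge_iff_le]
  rw [ge_iff_le, ← div_eq_mul_inv, le_div_iff₀ (by positivity : (0:ℝ) < (g:ℝ)^q')]
  calc (∑ gs ∈ s, (∏ i, ((2 * gs i + n i - 3 : ℕ) : ℝ) ^ (2 * gs i + n i - 3))) * (g:ℝ)^q'
      ≤ (4^q' * (M:ℝ)^M) * (g:ℝ)^q' := by
        apply mul_le_mul_of_nonneg_right (le_trans step1 step2) (by positivity)
    _ = 4^q' * ((M:ℝ)^M * (g:ℝ)^q') := by ring
    _ ≤ 4^q' * ((2*g-3:ℕ):ℝ)^(2*g-3) := by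
        apply mul_le_mul_of_nonneg_left step3 (by positivity)
end
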